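/- Theorem 1 (property 1): Let k be the equal opportunity control. For every game (X, λ_w, p, G, v_q, v_u, ω) and every discriminatory equilibrium (c̄*, d*), every decision policy d̂ maximizing U_F(·, μ*_RE, f*_RE) over k(X, μ*_RE, f*_RE) satisfies the strict interval inclusion [min_{i∈{w,b}} AR(i, d̂, μ*_RE), max_{i∈{w,b}} AR(i, d̂, μ*_RE)] ⊊ [min_{i∈{w,b}} AR(i, d*, μ*_RE), max_{i∈{w,b}} AR(i, d*, μ*_RE)]. That is, the equal opportunity control brings gains to the discriminated group in any discriminatory equilibrium. -/

import Mathlib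

/-!
Formalization of the Coate–Loury statistical discrimination model with
machine-learning (contractible) beliefs, following Zhu,
"The Impact of Equal Opportunity on Statistical Discrimination".
-/

open scoped BigOperators
open MeasureTheory

noncomputable section

attribute [local instance] Classical.propDecidable

/-- Group identities `I = {w, b}`. -/
inductive GrpI
  | w
  | b
deriving DecidableEq

instance : Fintype GrpI := ⟨{GrpI.w, GrpI.b}, fun x => by cases x <;> simp⟩

/-- Classes `Y = {q, u}` (qualified / unqualified). -/
inductive Cls
  | q
  | u
deriving DecidableEq

instance : Fintype Cls := ⟨{Cls.q, Cls.u}, fun x => by cases x <;> simp⟩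

/-- A game `(X, λ_w, p, G, v_q, v_u, ω)` of the Coate–Loury model.  The set of
other features is the finite product `X = X_1 × ⋯ × X_N`, encoded as the pi type
`(j : Fin N) → Xs j`.  The statistical model (Assumption 1) is encoded through a
nonempty subset `Ysub ⊆ {1, …, N}` together with the factorization
`p(x | i, y) = pY(x_𝒴 | y) · pC(x_{-𝒴} | i, x_𝒴)`.  The cost distribution is
given by an everywhere positive density `g` with `∫ g = 1` and `∫ |c| g(c) dc < ∞`. -/
structure Game (N : ℕ) (Xs : Fin N → Type) [∀ j, Fintype (Xs j)]
    [∀ j, Nonempty (Xs j)] where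
  lamw : ℝ
  lamw_pos : 0 < lamw
  lamw_lt_one : lamw < 1
  Ysub : Finset (Fin N)
  Ysub_nonempty : Ysub.Nonempty
  pY : ((j : Ysub) → Xs j.1) → Cls → ℝ
  pC : GrpI → ((j : Fin N) → Xs j) → ℝ
  pY_pos : ∀ xY y, 0 < pY xY y
  pC_pos : ∀ i x, 0 < pC i x
  pY_sum : ∀ y, ∑ xY, pY xY y = 1
  pC_sum : ∀ (i : GrpI) (xY : (j : Ysub) → Xs j.1),
    ∑ x ∈ Finset.univ.filter
        (fun x : (j : Fin N) → Xs j => (fun j : Ysub => x j.1) = xY),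
      pC i x = 1
  g : ℝ → ℝ
  g_pos : ∀ c, 0 < g c
  g_int : Integrable g
  g_norm : (∫ c, g c) = 1
  g_abs_int : Integrable fun c => |c| * g c
  vq : ℝ
  vu : ℝ
  om : ℝ
  vq_pos : 0 < vq
  vu_pos : 0 < vu
  om_pos : 0 < om

section Policies

variable {N : ℕ} {Xs : Fin N → Type}

/-- A decision policy `d : I × X → [0,1]`. -/
def IsPolicy (d : GrpI → ((j : Fin N) → Xs j) → ℝ) : Prop :=
  ∀ i x, d i x ∈ Set.Icc (0 : ℝ) 1

/-- A decision policy when data is color-blind, `d_cb : X → [0,1]`. -/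
def IsCbPolicy (dcb : ((j : Fin N) → Xs j) → ℝ) : Prop :=
  ∀ x, dcb x ∈ Set.Icc (0 : ℝ) 1

/-- `S ⊆ {1, …, N}` has the dependence property for the belief `f`:
`f` depends on `(i, x)` only up to `(i, x_S)`. -/
def DepProp {I : Type} (f : I → ((j : Fin N) → Xs j) → ℝ)
    (S : Finset (Fin N)) : Prop :=
  ∀ (i : I) (x x' : (j : Fin N) → Xs j), (∀ j ∈ S, x j = x' j) → f i x = f i x'

/-- The minimal subset `Ŷ(f)` with the dependence property. -/
def minDep {I : Type} (f : I → ((j : Fin N) → Xs j) → ℝ) : Finset (Fin N) :=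
  Finset.univ.filter fun j => ∀ S : Finset (Fin N), DepProp f S → j ∈ S

variable [∀ j, Fintype (Xs j)]

/-- Full-support probability distributions on `I × X` (the set `Δ°(I × X)`). -/
def FullSupp (μ : GrpI → ((j : Fin N) → Xs j) → ℝ) : Prop :=
  (∀ i x, 0 < μ i x) ∧ ∑ i, ∑ x, μ i x = 1

/-- Beliefs valued in `(0, 1)`. -/
def OpenBelief (f : GrpI → ((j : Fin N) → Xs j) → ℝ) : Prop :=
  ∀ i x, f i x ∈ Set.Ioo (0 : ℝ) 1

/-- Acceptance rate of group `i`. -/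
def AR (i : GrpI) (d μ : GrpI → ((j : Fin N) → Xs j) → ℝ) : ℝ :=
  (∑ x, d i x * μ i x) / ∑ x, μ i x

/-- True positive rate of group `i`. -/
def TP (i : GrpI) (d μ f : GrpI → ((j : Fin N) → Xs j) → ℝ) : ℝ :=
  (∑ x, d i x * μ i x * f i x) / ∑ x, μ i x * f i x

/-- The equal opportunity control `k(X, μ, f)`. -/
def EOset (μ f : GrpI → ((j : Fin N) → Xs j) → ℝ) :
    Set (GrpI → ((j : Fin N) → Xs j) → ℝ) :=
  {d | IsPolicy d ∧ TP GrpI.w d μ f = TP GrpI.b d μ f}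

/-- The color-blind control: all color-blind decision policies. -/
def CBset : Set (GrpI → ((j : Fin N) → Xs j) → ℝ) :=
  {d | IsPolicy d ∧ ∀ x, d GrpI.w x = d GrpI.b x}

/-- The no proxies control: policies depending on `(i,x)` only through `x_{Ŷ(f)}`. -/
def NoProxies (_μ f : GrpI → ((j : Fin N) → Xs j) → ℝ) :
    Set (GrpI → ((j : Fin N) → Xs j) → ℝ) :=
  {d | IsPolicy d ∧
    ∀ i i' x x', (∀ j ∈ minDep f, x j = x' j) → d i x = d i' x'}

/-- `ℓ²` distance between decision policies. -/
def polDist (d d' : GrpI → ((j : Fin N) → Xs j) → ℝ) : ℝ :=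
  Real.sqrt (∑ i, ∑ x, (d i x - d' i x) ^ 2)

/-- `ℓ²` distance between pairs `(μ, f)`. -/
def pairDist (μ f μ' f' : GrpI → ((j : Fin N) → Xs j) → ℝ) : ℝ :=
  Real.sqrt ((∑ i, ∑ x, (μ i x - μ' i x) ^ 2) + ∑ i, ∑ x, (f i x - f' i x) ^ 2)

/-- `ℓ²` distance between strategy profiles `(c̄, d)`. -/
def profDist (c : GrpI → ℝ) (d : GrpI → ((j : Fin N) → Xs j) → ℝ)
    (c' : GrpI → ℝ) (d' : GrpI → ((j : Fin N) → Xs j) → ℝ) : ℝ :=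
  Real.sqrt ((∑ i, (c i - c' i) ^ 2) + ∑ i, ∑ x, (d i x - d' i x) ^ 2)

end Policies

/-- Upper hemicontinuity of a correspondence on a set. -/
def UpperHemicontinuousOnCorr {α β : Type*} [TopologicalSpace α] [TopologicalSpace β]
    (F : α → Set β) (S : Set α) : Prop :=
  ∀ a ∈ S, ∀ V : Set β, IsOpen V → F a ⊆ V → ∀ᶠ a' in nhdsWithin a S, F a' ⊆ V

/-- Lower hemicontinuity of a correspondence on a set. -/
def LowerHemicontinuousOnCorr {α β : Type*} [TopologicalSpace α] [TopologicalSpace β]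
    (F : α → Set β) (S : Set α) : Prop :=
  ∀ a ∈ S, ∀ V : Set β, IsOpen V → (F a ∩ V).Nonempty →
    ∀ᶠ a' in nhdsWithin a S, (F a' ∩ V).Nonempty

namespace Game

variable {N : ℕ} {Xs : Fin N → Type} [∀ j, Fintype (Xs j)] [∀ j, Nonempty (Xs j)]
variable (Γ : Game N Xs)

/-- Projection `x ↦ x_𝒴`. -/
def proj (x : (j : Fin N) → Xs j) : (j : Γ.Ysub) → Xs j.1 := fun j => x j.1

/-- `p(x | i, y) = p(x_𝒴 | y) · p(x_{-𝒴} | i, x_𝒴)`. -/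
def p (i : GrpI) (x : (j : Fin N) → Xs j) (y : Cls) : ℝ :=
  Γ.pY (Γ.proj x) y * Γ.pC i x

/-- Group probabilities `λ_w`, `λ_b = 1 - λ_w`. -/
def lam : GrpI → ℝ := fun i =>
  match i with
  | GrpI.w => Γ.lamw
  | GrpI.b => 1 - Γ.lamw

/-- The CDF `G` of the cost distribution. -/
def G (c : ℝ) : ℝ := ∫ t in Set.Iic c, Γ.g t

/-- The likelihood function `l(x) = p(x_𝒴 | q) / p(x_𝒴 | u)`. -/
def lhd (x : (j : Fin N) → Xs j) : ℝ :=
  Γ.pY (Γ.proj x) Cls.q / Γ.pY (Γ.proj x) Cls.u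

/-- The likelihood function on `X_𝒴`. -/
def lhdY (xY : (j : Γ.Ysub) → Xs j.1) : ℝ := Γ.pY xY Cls.q / Γ.pY xY Cls.u

/-- The set of likelihood values `{l_1 < … < l_n}`. -/
def LVset : Set ℝ := Set.range Γ.lhd

/-- The assumption that `1` is not a likelihood value
(equivalently, `WW` is single-peaked). -/
def OneNotLV : Prop := (1 : ℝ) ∉ Γ.LVset

/-- The largest likelihood value `l_n`. -/
def lmax : ℝ := sSup Γ.LVset

/-- `⌈ℓ⌉`: the smallest likelihood value `≥ ℓ`. -/
def lceil (ℓ : ℝ) : ℝ := sInf {v | v ∈ Γ.LVset ∧ ℓ ≤ v}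

/-- `⌈ℓ⌉⁻`: the next smallest likelihood value below `⌈ℓ⌉` (or `l_0 = 0`). -/
def lceilm (ℓ : ℝ) : ℝ := sSup (insert 0 {v | v ∈ Γ.LVset ∧ v < Γ.lceil ℓ})

/-- The smallest likelihood value `> ℓ`. -/
def lnext (ℓ : ℝ) : ℝ := sInf {v | v ∈ Γ.LVset ∧ ℓ < v}

/-- The true distribution of features `μ_RE` given cost thresholds `c̄`. -/
def muRE (c : GrpI → ℝ) (i : GrpI) (x : (j : Fin N) → Xs j) : ℝ :=
  Γ.lam i * (Γ.G (c i) * Γ.p i x Cls.q + (1 - Γ.G (c i)) * Γ.p i x Cls.u)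

/-- The true conditional probability (calibrated belief) `f_RE` given `c̄`. -/
def fRE (c : GrpI → ℝ) (i : GrpI) (x : (j : Fin N) → Xs j) : ℝ :=
  Γ.G (c i) * Γ.p i x Cls.q /
    (Γ.G (c i) * Γ.p i x Cls.q + (1 - Γ.G (c i)) * Γ.p i x Cls.u)

/-- Utility `U_i(c̄(i), d(i))` of the representative `i`-applicant. -/
def Uapp (i : GrpI) (ci : ℝ) (di : ((j : Fin N) → Xs j) → ℝ) : ℝ :=
  Γ.om * ∑ x, (Γ.G ci * Γ.p i x Cls.q + (1 - Γ.G ci) * Γ.p i x Cls.u) * di x -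
    ∫ t in Set.Iic ci, t * Γ.g t

/-- Firm utility `U_F(d, μ, f)`. -/
def UF (d μ f : GrpI → ((j : Fin N) → Xs j) → ℝ) : ℝ :=
  ∑ i, ∑ x, d i x * μ i x * (f i x * Γ.vq - (1 - f i x) * Γ.vu)

/-- The color-blind true distribution of features `μ_cb,RE`. -/
def mucbRE (c : GrpI → ℝ) (x : (j : Fin N) → Xs j) : ℝ :=
  Γ.muRE c GrpI.w x + Γ.muRE c GrpI.b x

/-- The color-blind true conditional probability `f_cb,RE`. -/
def fcbRE (c : GrpI → ℝ) (x : (j : Fin N) → Xs j) : ℝ :=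
  (Γ.muRE c GrpI.w x * Γ.fRE c GrpI.w x + Γ.muRE c GrpI.b x * Γ.fRE c GrpI.b x) /
    Γ.mucbRE c x

/-- Firm utility when data is color-blind. -/
def UFcb (dcb μcb fcb : ((j : Fin N) → Xs j) → ℝ) : ℝ :=
  ∑ x, dcb x * μcb x * (fcb x * Γ.vq - (1 - fcb x) * Γ.vu)

/-- `d(i | l_m)`: conditional acceptance probability at likelihood value `lv`. -/
def dcond (i : GrpI) (di : ((j : Fin N) → Xs j) → ℝ) (lv : ℝ) : ℝ :=
  (∑ x ∈ Finset.univ.filter (fun x => Γ.lhd x = lv), Γ.p i x Cls.q * di x) /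
    ∑ x ∈ Finset.univ.filter (fun x => Γ.lhd x = lv), Γ.p i x Cls.q

/-- The within-group policy `d(i)` is associated with the likelihood mixture `ℓ`. -/
def AssociatedWith (i : GrpI) (di : ((j : Fin N) → Xs j) → ℝ) (ℓ : ℝ) : Prop :=
  0 ≤ ℓ ∧ ℓ ≤ Γ.lmax ∧
    ∀ lv ∈ Γ.LVset,
      (Γ.lceil ℓ < lv → Γ.dcond i di lv = 1) ∧
      (lv = Γ.lceil ℓ →
        Γ.dcond i di lv = (Γ.lceil ℓ - ℓ) / (Γ.lceil ℓ - Γ.lceilm ℓ)) ∧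
      (lv < Γ.lceil ℓ → Γ.dcond i di lv = 0)

/-- A decision policy is fair if both within-group policies are associated with
the same likelihood mixture. -/
def Fair (d : GrpI → ((j : Fin N) → Xs j) → ℝ) : Prop :=
  ∃ ℓ, Γ.AssociatedWith GrpI.w (d GrpI.w) ℓ ∧ Γ.AssociatedWith GrpI.b (d GrpI.b) ℓ

/-- `WW(l_m) = ω ∑_{x_𝒴 : l(x_𝒴) > l_m} (p(x_𝒴|q) - p(x_𝒴|u))`. -/
def WWval (t : ℝ) : ℝ :=
  Γ.om * ∑ xY ∈ Finset.univ.filter (fun xY => t < Γ.lhdY xY),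
    (Γ.pY xY Cls.q - Γ.pY xY Cls.u)

/-- The piecewise-linear function `WW` interpolating the points `(l_m, WW(l_m))`. -/
def WW (ℓ : ℝ) : ℝ :=
  if Γ.lceil ℓ = Γ.lceilm ℓ then Γ.WWval (Γ.lceil ℓ)
  else
    (Γ.WWval (Γ.lceilm ℓ) * (Γ.lceil ℓ - ℓ) +
        Γ.WWval (Γ.lceil ℓ) * (ℓ - Γ.lceilm ℓ)) /
      (Γ.lceil ℓ - Γ.lceilm ℓ)

/-- `EĒ(l_m)`: the unique cost with `G(EĒ(l_m)) = 1 / ((v_q/v_u) l_m + 1)`. -/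
def EEbar (lv : ℝ) : ℝ := sInf {cc | 1 / (Γ.vq / Γ.vu * lv + 1) ≤ Γ.G cc}

/-- The correspondence `EE : [0, l_n] ⇒ ℝ`. -/
def EE (ℓ : ℝ) : Set ℝ :=
  if ℓ = 0 then Set.Ici (Γ.EEbar (Γ.lceil 0))
  else if ℓ = Γ.lmax then Set.Iic (Γ.EEbar Γ.lmax)
  else if ℓ ∈ Γ.LVset then Set.Icc (Γ.EEbar (Γ.lnext ℓ)) (Γ.EEbar ℓ)
  else {Γ.EEbar (Γ.lceil ℓ)}

/-- Each representative applicant's cost threshold is a best response to `d`. -/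
def BestResponds (c : GrpI → ℝ) (d : GrpI → ((j : Fin N) → Xs j) → ℝ) : Prop :=
  ∀ (i : GrpI) (c' : ℝ), Γ.Uapp i c' (d i) ≤ Γ.Uapp i (c i) (d i)

/-- An (un-controlled) equilibrium. -/
def IsEquilibrium (c : GrpI → ℝ) (d : GrpI → ((j : Fin N) → Xs j) → ℝ) : Prop :=
  IsPolicy d ∧ Γ.BestResponds c d ∧
    ∀ d', IsPolicy d' →
      Γ.UF d' (Γ.muRE c) (Γ.fRE c) ≤ Γ.UF d (Γ.muRE c) (Γ.fRE c)

/-- A `k`-controlled equilibrium, for the control `(μ, f) ↦ K μ f`. -/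
def IsControlledEq
    (K : (GrpI → ((j : Fin N) → Xs j) → ℝ) → (GrpI → ((j : Fin N) → Xs j) → ℝ) →
      Set (GrpI → ((j : Fin N) → Xs j) → ℝ))
    (c : GrpI → ℝ) (d : GrpI → ((j : Fin N) → Xs j) → ℝ) : Prop :=
  d ∈ K (Γ.muRE c) (Γ.fRE c) ∧ Γ.BestResponds c d ∧
    ∀ d' ∈ K (Γ.muRE c) (Γ.fRE c),
      Γ.UF d' (Γ.muRE c) (Γ.fRE c) ≤ Γ.UF d (Γ.muRE c) (Γ.fRE c)

/-- `𝒮_k(μ, f)`: firm-optimal policies under the control `K` at `(μ, f)`. -/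
def Smax
    (K : (GrpI → ((j : Fin N) → Xs j) → ℝ) → (GrpI → ((j : Fin N) → Xs j) → ℝ) →
      Set (GrpI → ((j : Fin N) → Xs j) → ℝ))
    (μ f : GrpI → ((j : Fin N) → Xs j) → ℝ) :
    Set (GrpI → ((j : Fin N) → Xs j) → ℝ) :=
  {d | d ∈ K μ f ∧ ∀ d' ∈ K μ f, Γ.UF d' μ f ≤ Γ.UF d μ f}

/-- A `k`-controlled `ε`-equilibrium. -/
def IsCtrlEpsEq
    (K : (GrpI → ((j : Fin N) → Xs j) → ℝ) → (GrpI → ((j : Fin N) → Xs j) → ℝ) →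
      Set (GrpI → ((j : Fin N) → Xs j) → ℝ))
    (ε : ℝ) (c : GrpI → ℝ) (d : GrpI → ((j : Fin N) → Xs j) → ℝ) : Prop :=
  ∃ μ f, FullSupp μ ∧ OpenBelief f ∧
    pairDist μ f (Γ.muRE c) (Γ.fRE c) ≤ ε ∧
    Γ.BestResponds c d ∧ d ∈ K μ f ∧ ∀ d' ∈ K μ f, Γ.UF d' μ f ≤ Γ.UF d μ f

/-- Best responses of applicants to a color-blind policy. -/
def BestRespondsCb (c : GrpI → ℝ) (dcb : ((j : Fin N) → Xs j) → ℝ) : Prop :=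
  ∀ (i : GrpI) (c' : ℝ), Γ.Uapp i c' dcb ≤ Γ.Uapp i (c i) dcb

/-- An equilibrium when data is color-blind (unrestricted control). -/
def IsCbEquilibrium (c : GrpI → ℝ) (dcb : ((j : Fin N) → Xs j) → ℝ) : Prop :=
  IsCbPolicy dcb ∧ Γ.BestRespondsCb c dcb ∧
    ∀ dcb', IsCbPolicy dcb' →
      Γ.UFcb dcb' (Γ.mucbRE c) (Γ.fcbRE c) ≤ Γ.UFcb dcb (Γ.mucbRE c) (Γ.fcbRE c)

/-- A `k_cb`-controlled equilibrium when data is color-blind. -/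
def IsCbControlledEq (K : Set (((j : Fin N) → Xs j) → ℝ)) (c : GrpI → ℝ)
    (dcb : ((j : Fin N) → Xs j) → ℝ) : Prop :=
  dcb ∈ K ∧ Γ.BestRespondsCb c dcb ∧
    ∀ dcb' ∈ K,
      Γ.UFcb dcb' (Γ.mucbRE c) (Γ.fcbRE c) ≤ Γ.UFcb dcb (Γ.mucbRE c) (Γ.fcbRE c)

end Game

/-- A control when data is color-blind: for each `X` and each
`(μ_cb, f_cb) ∈ Δ°(X) × (0,1)^X` it specifies a nonempty compact set of
color-blind decision policies. -/
structure CbControl : Type 1 where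
  sets : ∀ (N : ℕ) (Xs : Fin N → Type) [∀ j, Fintype (Xs j)] [∀ j, Nonempty (Xs j)],
    (((j : Fin N) → Xs j) → ℝ) → (((j : Fin N) → Xs j) → ℝ) →
      Set (((j : Fin N) → Xs j) → ℝ)
  nonempty : ∀ (N : ℕ) (Xs : Fin N → Type) [∀ j, Fintype (Xs j)]
    [∀ j, Nonempty (Xs j)] (μ f : ((j : Fin N) → Xs j) → ℝ),
    (∀ x, 0 < μ x) → (∑ x, μ x = 1) → (∀ x, f x ∈ Set.Ioo (0 : ℝ) 1) →
    (sets N Xs μ f).Nonempty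
  compact : ∀ (N : ℕ) (Xs : Fin N → Type) [∀ j, Fintype (Xs j)]
    [∀ j, Nonempty (Xs j)] (μ f : ((j : Fin N) → Xs j) → ℝ),
    (∀ x, 0 < μ x) → (∑ x, μ x = 1) → (∀ x, f x ∈ Set.Ioo (0 : ℝ) 1) →
    IsCompact (sets N Xs μ f)
  mem_policy : ∀ (N : ℕ) (Xs : Fin N → Type) [∀ j, Fintype (Xs j)]
    [∀ j, Nonempty (Xs j)] (μ f : ((j : Fin N) → Xs j) → ℝ),
    (∀ x, 0 < μ x) → (∑ x, μ x = 1) → (∀ x, f x ∈ Set.Ioo (0 : ℝ) 1) →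
    sets N Xs μ f ⊆ {dcb | IsCbPolicy dcb}

/-! ### Auxiliary machinery for the proof of Theorem 1 (property 1). -/

namespace ZhuAux

open Finset

lemma grpi_sum (F : GrpI → ℝ) : ∑ j, F j = F GrpI.w + F GrpI.b := by
  have h : (Finset.univ : Finset GrpI) = {GrpI.w, GrpI.b} := by
    ext j; cases j <;> simp
  rw [h, Finset.sum_insert (by simp), Finset.sum_singleton]

/-- The other group. -/
def oth : GrpI → GrpI
  | GrpI.w => GrpI.b
  | GrpI.b => GrpI.w

lemma oth_ne (i : GrpI) : oth i ≠ i := by cases i <;> simp [oth]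

lemma grpi_sum_oth (F : GrpI → ℝ) (i : GrpI) : ∑ j, F j = F i + F (oth i) := by
  cases i <;> rw [grpi_sum] <;> simp [oth] <;> ring

variable {N : ℕ} {Xs : Fin N → Type} [∀ j, Fintype (Xs j)] [∀ j, Nonempty (Xs j)]
variable (Γ : Game N Xs)

/-- Group-`i` weighted fiber average of a policy `e` over the fiber above `xY`. -/
def fibAvg (i : GrpI) (e : ((j : Fin N) → Xs j) → ℝ) (xY : (j : Γ.Ysub) → Xs j.1) : ℝ :=
  ∑ x ∈ Finset.univ.filter (fun x => Γ.proj x = xY), Γ.pC i x * e x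

lemma fibAvg_one (i : GrpI) (xY : (j : Γ.Ysub) → Xs j.1) :
    fibAvg Γ i (fun _ => (1 : ℝ)) xY = 1 := by
  have h := Γ.pC_sum i xY
  rw [fibAvg]
  simp only [mul_one]; convert h using 3; rfl

/-- The master fiberwise summation identity. -/
lemma fiber_sum (i : GrpI) (e : ((j : Fin N) → Xs j) → ℝ)
    (h : ((j : Γ.Ysub) → Xs j.1) → ℝ) :
    ∑ x, e x * (h (Γ.proj x) * Γ.pC i x) = ∑ xY, h xY * fibAvg Γ i e xY := by
  classical
  rw [← Finset.sum_fiberwise Finset.univ (fun x => Γ.proj x)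
      (fun x => e x * (h (Γ.proj x) * Γ.pC i x))]
  refine Finset.sum_congr rfl fun xY _ => ?_
  rw [fibAvg, Finset.mul_sum]
  refine Finset.sum_congr rfl fun x hx => ?_
  rw [(Finset.mem_filter.mp hx).2]; ring

lemma sum_p (i : GrpI) (y : Cls) : ∑ x, Γ.p i x y = 1 := by
  have h := fiber_sum Γ i (fun _ => (1 : ℝ)) (fun xY => Γ.pY xY y)
  have h2 : ∑ x, (1 : ℝ) * (Γ.pY (Γ.proj x) y * Γ.pC i x) = ∑ x, Γ.p i x y :=
    Finset.sum_congr rfl fun x _ => by rw [Game.p]; ring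
  rw [← h2, h]
  have h3 : ∑ xY, Γ.pY xY y * fibAvg Γ i (fun _ => (1:ℝ)) xY = ∑ xY, Γ.pY xY y :=
    Finset.sum_congr rfl fun xY _ => by rw [fibAvg_one]; ring
  rw [h3, Γ.pY_sum]

/-- Transfer of a group-`i` policy to a policy usable for any group. -/
def trN (i : GrpI) (e : ((j : Fin N) → Xs j) → ℝ) (x : (j : Fin N) → Xs j) : ℝ :=
  fibAvg Γ i e (Γ.proj x)

lemma trN_nonneg (i : GrpI) {e} (he : ∀ x, e x ∈ Set.Icc (0:ℝ) 1) (x) :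
    0 ≤ trN Γ i e x :=
  Finset.sum_nonneg fun x' _ => mul_nonneg (Γ.pC_pos i x').le (he x').1

lemma trN_le_one (i : GrpI) {e} (he : ∀ x, e x ∈ Set.Icc (0:ℝ) 1) (x) :
    trN Γ i e x ≤ 1 := by
  have h1 : trN Γ i e x ≤ fibAvg Γ i (fun _ => (1:ℝ)) (Γ.proj x) := by
    refine Finset.sum_le_sum fun x' _ => ?_
    simpa using mul_le_mul_of_nonneg_left (he x').2 (Γ.pC_pos i x').le
  rw [fibAvg_one] at h1; exact h1

lemma trN_sum (i i' : GrpI) (e : ((j : Fin N) → Xs j) → ℝ) (y : Cls) :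
    ∑ x, trN Γ i e x * Γ.p i' x y = ∑ x, e x * Γ.p i x y := by
  have hL : ∑ x, trN Γ i e x * Γ.p i' x y
      = ∑ x, (1:ℝ) * ((fun xY => Γ.pY xY y * fibAvg Γ i e xY) (Γ.proj x) * Γ.pC i' x) :=
    Finset.sum_congr rfl fun x _ => by rw [Game.p, trN]; ring
  have hR : ∑ x, e x * Γ.p i x y
      = ∑ x, e x * (Γ.pY (Γ.proj x) y * Γ.pC i x) :=
    Finset.sum_congr rfl fun x _ => by rw [Game.p]
  rw [hL, hR, fiber_sum Γ i' (fun _ => (1:ℝ)) (fun xY => Γ.pY xY y * fibAvg Γ i e xY),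
    fiber_sum Γ i e (fun xY => Γ.pY xY y)]
  refine Finset.sum_congr rfl fun xY _ => ?_
  rw [fibAvg_one]; ring

end ZhuAux
namespace ZhuAux

open MeasureTheory Finset

variable {N : ℕ} {Xs : Fin N → Type} [∀ j, Fintype (Xs j)] [∀ j, Nonempty (Xs j)]
variable (Γ : Game N Xs)

lemma tg_int : Integrable (fun t => t * Γ.g t) := by
  refine Γ.g_abs_int.mono' ?_ ?_
  · exact (aestronglyMeasurable_id.mul Γ.g_int.aestronglyMeasurable)
  · refine Filter.Eventually.of_forall fun t => ?_
    rw [Real.norm_eq_abs, abs_mul, abs_of_pos (Γ.g_pos t)]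

lemma integral_Iic_split {f : ℝ → ℝ} (hf : Integrable f) {a b : ℝ} (hab : a ≤ b) :
    (∫ t in Set.Iic b, f t) - ∫ t in Set.Iic a, f t = ∫ t in Set.Ioc a b, f t := by
  have hu : Set.Iic a ∪ Set.Ioc a b = Set.Iic b := Set.Iic_union_Ioc_eq_Iic hab
  have hd : Disjoint (Set.Iic a) (Set.Ioc a b) := Set.Iic_disjoint_Ioc le_rfl
  rw [← hu, setIntegral_union hd measurableSet_Ioc hf.integrableOn hf.integrableOn]
  ring

lemma integral_pos_on_Ioc {f : ℝ → ℝ} (hf : Integrable f) {a b : ℝ} (hab : a < b)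
    (h0 : ∀ t ∈ Set.Ioc a b, 0 ≤ f t) (h1 : ∀ t ∈ Set.Ioo a b, 0 < f t) :
    0 < ∫ t in Set.Ioc a b, f t := by
  rw [setIntegral_pos_iff_support_of_nonneg_ae ?_ hf.integrableOn]
  · have hsub : Set.Ioo a b ⊆ Function.support f ∩ Set.Ioc a b := fun t ht =>
      ⟨ne_of_gt (h1 t ht), Set.Ioo_subset_Ioc_self ht⟩
    calc (0:ENNReal) < volume (Set.Ioo a b) := by
          rw [Real.volume_Ioo]; exact ENNReal.ofReal_pos.mpr (by linarith)
      _ ≤ volume (Function.support f ∩ Set.Ioc a b) := measure_mono hsub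
  · filter_upwards [ae_restrict_mem measurableSet_Ioc] with t ht using h0 t ht

lemma G_pos (a : ℝ) : 0 < Γ.G a := by
  rw [Game.G, setIntegral_pos_iff_support_of_nonneg_ae
      (Filter.Eventually.of_forall fun t => (Γ.g_pos t).le) Γ.g_int.integrableOn]
  have : Function.support Γ.g ∩ Set.Iic a = Set.Iic a := by
    ext t; simp [Function.support, ne_of_gt (Γ.g_pos t)]
  rw [this, Real.volume_Iic]; simp

lemma G_strict {a b : ℝ} (hab : a < b) : Γ.G a < Γ.G b := by
  have h := integral_Iic_split (f := Γ.g) Γ.g_int hab.le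
  have hpos : 0 < ∫ t in Set.Ioc a b, Γ.g t :=
    integral_pos_on_Ioc Γ.g_int hab (fun t _ => (Γ.g_pos t).le) (fun t _ => Γ.g_pos t)
  rw [Game.G, Game.G]; linarith

lemma G_lt_one (a : ℝ) : Γ.G a < 1 := by
  have hu : Set.Iic a ∪ Set.Ioi a = Set.univ := Set.Iic_union_Ioi
  have hd : Disjoint (Set.Iic a) (Set.Ioi a) := Set.Iic_disjoint_Ioi le_rfl
  have hsplit := setIntegral_union (f := Γ.g) (μ := volume) hd measurableSet_Ioi
    Γ.g_int.integrableOn Γ.g_int.integrableOn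
  rw [hu, setIntegral_univ, Γ.g_norm] at hsplit
  have hpos : 0 < ∫ t in Set.Ioi a, Γ.g t := by
    rw [setIntegral_pos_iff_support_of_nonneg_ae
        (Filter.Eventually.of_forall fun t => (Γ.g_pos t).le) Γ.g_int.integrableOn]
    have : Function.support Γ.g ∩ Set.Ioi a = Set.Ioi a := by
      ext t; simp [Function.support, ne_of_gt (Γ.g_pos t)]
    rw [this, Real.volume_Ioi]; simp
  rw [Game.G]; linarith

end ZhuAux
namespace ZhuAux

open MeasureTheory Finset

variable {N : ℕ} {Xs : Fin N → Type} [∀ j, Fintype (Xs j)] [∀ j, Nonempty (Xs j)]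
variable (Γ : Game N Xs)

/-- True positive mass of an (ungrouped) policy for group `i`. -/
def TT (i : GrpI) (e : ((j : Fin N) → Xs j) → ℝ) : ℝ := ∑ x, e x * Γ.p i x Cls.q

/-- False positive mass of an (ungrouped) policy for group `i`. -/
def FF (i : GrpI) (e : ((j : Fin N) → Xs j) → ℝ) : ℝ := ∑ x, e x * Γ.p i x Cls.u

lemma p_pos (i x y) : 0 < Γ.p i x y := mul_pos (Γ.pY_pos _ y) (Γ.pC_pos i x)

lemma TT_nonneg (i : GrpI) {e} (he : ∀ x, e x ∈ Set.Icc (0:ℝ) 1) : 0 ≤ TT Γ i e :=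
  Finset.sum_nonneg fun x _ => mul_nonneg (he x).1 (p_pos Γ i x Cls.q).le

lemma FF_nonneg (i : GrpI) {e} (he : ∀ x, e x ∈ Set.Icc (0:ℝ) 1) : 0 ≤ FF Γ i e :=
  Finset.sum_nonneg fun x _ => mul_nonneg (he x).1 (p_pos Γ i x Cls.u).le

lemma lam_pos (i : GrpI) : 0 < Γ.lam i := by
  cases i
  · exact Γ.lamw_pos
  · simp only [Game.lam]; linarith [Γ.lamw_lt_one]

lemma trN_TT (i i' : GrpI) (e) : TT Γ i' (trN Γ i e) = TT Γ i e := trN_sum Γ i i' e Cls.q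
lemma trN_FF (i i' : GrpI) (e) : FF Γ i' (trN Γ i e) = FF Γ i e := trN_sum Γ i i' e Cls.u

variable (c : GrpI → ℝ)

lemma expand_sum (i : GrpI) (e : ((j : Fin N) → Xs j) → ℝ) (G0 : ℝ) :
    ∑ x, (G0 * Γ.p i x Cls.q + (1 - G0) * Γ.p i x Cls.u) * e x
      = G0 * (TT Γ i e - FF Γ i e) + FF Γ i e := by
  rw [TT, FF, ← Finset.sum_sub_distrib, Finset.mul_sum, ← Finset.sum_add_distrib]
  exact Finset.sum_congr rfl fun x _ => by ring

/-- Every best-responding cost threshold equals `ω` times the net benefit. -/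
lemma cost_eq (d : GrpI → ((j : Fin N) → Xs j) → ℝ)
    (hbr : Γ.BestResponds c d) (i : GrpI) :
    c i = Γ.om * (TT Γ i (d i) - FF Γ i (d i)) := by
  set B := TT Γ i (d i) - FF Γ i (d i) with hB
  set β := Γ.om * B with hβ
  have hU : ∀ ci : ℝ, Γ.Uapp i ci (d i)
      = Γ.om * FF Γ i (d i) + Γ.G ci * β - ∫ t in Set.Iic ci, t * Γ.g t := by
    intro ci
    rw [Game.Uapp, expand_sum Γ i (d i) (Γ.G ci)]
    ring
  have hint : Integrable (fun t => (β - t) * Γ.g t) := by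
    have h1 : Integrable (fun t => β * Γ.g t) := Γ.g_int.const_mul β
    have := h1.sub (tg_int Γ)
    refine this.congr (Filter.Eventually.of_forall fun t => ?_)
    simp only [Pi.sub_apply]; ring
  rcases lt_trichotomy (c i) β with hlt | heqc | hgt
  · exfalso
    have hbr' := hbr i β
    rw [hU, hU] at hbr'
    have hG : Γ.G β - Γ.G (c i) = ∫ t in Set.Ioc (c i) β, Γ.g t := by
      rw [Game.G, Game.G]; exact integral_Iic_split Γ.g_int hlt.le
    have hTG := integral_Iic_split (f := fun t => t * Γ.g t) (tg_int Γ) hlt.le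
    have hkey : (∫ t in Set.Ioc (c i) β, (β - t) * Γ.g t) ≤ 0 := by
      have hexp : (∫ t in Set.Ioc (c i) β, (β - t) * Γ.g t)
          = β * (∫ t in Set.Ioc (c i) β, Γ.g t) - ∫ t in Set.Ioc (c i) β, t * Γ.g t := by
        rw [← integral_const_mul, ← integral_sub ((Γ.g_int.const_mul β).integrableOn)
          ((tg_int Γ).integrableOn)]
        exact integral_congr_ae (Filter.Eventually.of_forall fun t => by ring)
      have h2 : β * (Γ.G β - Γ.G (c i)) = β * ∫ t in Set.Ioc (c i) β, Γ.g t := by rw [hG]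
      rw [hexp]; nlinarith [hbr', h2, hTG]
    have : 0 < ∫ t in Set.Ioc (c i) β, (β - t) * Γ.g t := by
      refine integral_pos_on_Ioc hint hlt (fun t ht => ?_) (fun t ht => ?_)
      · exact mul_nonneg (by linarith [ht.2]) (Γ.g_pos t).le
      · exact mul_pos (by linarith [ht.2]) (Γ.g_pos t)
    linarith
  · exact heqc
  · exfalso
    have hbr' := hbr i β
    rw [hU, hU] at hbr'
    have hG : Γ.G (c i) - Γ.G β = ∫ t in Set.Ioc β (c i), Γ.g t := by
      rw [Game.G, Game.G]; exact integral_Iic_split Γ.g_int hgt.le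
    have hTG := integral_Iic_split (f := fun t => t * Γ.g t) (tg_int Γ) hgt.le
    have hint' : Integrable (fun t => (t - β) * Γ.g t) := by
      have := (tg_int Γ).sub (Γ.g_int.const_mul β)
      refine this.congr (Filter.Eventually.of_forall fun t => ?_)
      simp only [Pi.sub_apply]; ring
    have hkey : (∫ t in Set.Ioc β (c i), (t - β) * Γ.g t) ≤ 0 := by
      have hexp : (∫ t in Set.Ioc β (c i), (t - β) * Γ.g t)
          = (∫ t in Set.Ioc β (c i), t * Γ.g t) - β * ∫ t in Set.Ioc β (c i), Γ.g t := by
        rw [← integral_const_mul, ← integral_sub ((tg_int Γ).integrableOn)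
          ((Γ.g_int.const_mul β).integrableOn)]
        exact integral_congr_ae (Filter.Eventually.of_forall fun t => by ring)
      have h2 : β * (Γ.G (c i) - Γ.G β) = β * ∫ t in Set.Ioc β (c i), Γ.g t := by rw [hG]
      rw [hexp]; nlinarith [hbr', h2, hTG]
    have : 0 < ∫ t in Set.Ioc β (c i), (t - β) * Γ.g t := by
      refine integral_pos_on_Ioc hint' hgt (fun t ht => ?_) (fun t ht => ?_)
      · exact mul_nonneg (by linarith [ht.1]) (Γ.g_pos t).le
      · exact mul_pos (by linarith [ht.1]) (Γ.g_pos t)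
    linarith

end ZhuAux
namespace ZhuAux

open Finset

variable {N : ℕ} {Xs : Fin N → Type} [∀ j, Fintype (Xs j)] [∀ j, Nonempty (Xs j)]
variable (Γ : Game N Xs) (c : GrpI → ℝ)

lemma TT_one (i : GrpI) : TT Γ i (fun _ => (1:ℝ)) = 1 := by
  rw [TT]; simpa using sum_p Γ i Cls.q

lemma FF_one (i : GrpI) : FF Γ i (fun _ => (1:ℝ)) = 1 := by
  rw [FF]; simpa using sum_p Γ i Cls.u

lemma expand_sum2 (i : GrpI) (e : ((j : Fin N) → Xs j) → ℝ) (A B : ℝ) :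
    ∑ x, e x * (A * Γ.p i x Cls.q - B * Γ.p i x Cls.u) = A * TT Γ i e - B * FF Γ i e := by
  rw [TT, FF, Finset.mul_sum, Finset.mul_sum, ← Finset.sum_sub_distrib]
  exact Finset.sum_congr rfl fun x _ => by ring

lemma D_pos (i x) : 0 < Γ.G (c i) * Γ.p i x Cls.q + (1 - Γ.G (c i)) * Γ.p i x Cls.u := by
  have h1 := G_pos Γ (c i); have h2 := G_lt_one Γ (c i)
  have h3 := p_pos Γ i x Cls.q; have h4 := p_pos Γ i x Cls.u
  nlinarith

lemma muRE_sum (i : GrpI) : ∑ x, Γ.muRE c i x = Γ.lam i := by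
  have : ∑ x, Γ.muRE c i x
      = Γ.lam i * ∑ x, (Γ.G (c i) * Γ.p i x Cls.q + (1 - Γ.G (c i)) * Γ.p i x Cls.u)
        * (fun _ => (1:ℝ)) x := by
    rw [Finset.mul_sum]; exact Finset.sum_congr rfl fun x _ => by rw [Game.muRE]; ring
  rw [this, expand_sum Γ i (fun _ => (1:ℝ)) (Γ.G (c i)), TT_one, FF_one]; ring

/-- The linear coefficient of the firm's objective. -/
lemma coeff_eq (i x) :
    Γ.muRE c i x * (Γ.fRE c i x * Γ.vq - (1 - Γ.fRE c i x) * Γ.vu)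
      = Γ.lam i * (Γ.G (c i) * Γ.vq * Γ.p i x Cls.q
          - (1 - Γ.G (c i)) * Γ.vu * Γ.p i x Cls.u) := by
  have hD := D_pos Γ c i x
  rw [Game.muRE, Game.fRE]
  field_simp
  ring

lemma muf_eq (i x) :
    Γ.muRE c i x * Γ.fRE c i x = Γ.lam i * (Γ.G (c i) * Γ.p i x Cls.q) := by
  have hD := D_pos Γ c i x
  rw [Game.muRE, Game.fRE]
  field_simp

lemma TP_eq (i : GrpI) (e : GrpI → ((j : Fin N) → Xs j) → ℝ) :
    TP i e (Γ.muRE c) (Γ.fRE c) = TT Γ i (e i) := by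
  have hnum : ∑ x, e i x * Γ.muRE c i x * Γ.fRE c i x
      = Γ.lam i * Γ.G (c i) * TT Γ i (e i) := by
    rw [TT, Finset.mul_sum]
    exact Finset.sum_congr rfl fun x _ => by
      rw [mul_assoc, muf_eq Γ c i x]; ring
  have hden : ∑ x, Γ.muRE c i x * Γ.fRE c i x = Γ.lam i * Γ.G (c i) := by
    have : ∑ x, Γ.muRE c i x * Γ.fRE c i x
        = Γ.lam i * Γ.G (c i) * ∑ x, Γ.p i x Cls.q := by
      rw [Finset.mul_sum]
      exact Finset.sum_congr rfl fun x _ => by rw [muf_eq Γ c i x]; ring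
    rw [this, sum_p, mul_one]
  have hne : Γ.lam i * Γ.G (c i) ≠ 0 :=
    (mul_pos (lam_pos Γ i) (G_pos Γ (c i))).ne'
  rw [TP, hnum, hden, mul_comm, mul_div_assoc, div_self hne, mul_one]

lemma AR_eq (i : GrpI) (e : GrpI → ((j : Fin N) → Xs j) → ℝ) :
    AR i e (Γ.muRE c) = Γ.G (c i) * (TT Γ i (e i) - FF Γ i (e i)) + FF Γ i (e i) := by
  have hnum : ∑ x, e i x * Γ.muRE c i x
      = Γ.lam i * (Γ.G (c i) * (TT Γ i (e i) - FF Γ i (e i)) + FF Γ i (e i)) := by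
    rw [← expand_sum Γ i (e i) (Γ.G (c i)), Finset.mul_sum]
    exact Finset.sum_congr rfl fun x _ => by rw [Game.muRE]; ring
  rw [AR, hnum, muRE_sum, mul_comm, mul_div_assoc, div_self (lam_pos Γ i).ne', mul_one]

lemma UF_eq (e : GrpI → ((j : Fin N) → Xs j) → ℝ) :
    Γ.UF e (Γ.muRE c) (Γ.fRE c)
      = ∑ j, Γ.lam j * (Γ.G (c j) * Γ.vq * TT Γ j (e j)
          - (1 - Γ.G (c j)) * Γ.vu * FF Γ j (e j)) := by
  rw [Game.UF]
  refine Finset.sum_congr rfl fun j _ => ?_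
  rw [← expand_sum2 Γ j (e j) (Γ.G (c j) * Γ.vq) ((1 - Γ.G (c j)) * Γ.vu), Finset.mul_sum]
  exact Finset.sum_congr rfl fun x _ => by
    rw [mul_assoc, coeff_eq Γ c j x]; ring

/-- The likelihood-ratio coefficient for group `i`. -/
def phi (i : GrpI) (x : (j : Fin N) → Xs j) : ℝ :=
  Γ.G (c i) * Γ.vq * Γ.p i x Cls.q - (1 - Γ.G (c i)) * Γ.vu * Γ.p i x Cls.u

lemma UF_as_phi (e : GrpI → ((j : Fin N) → Xs j) → ℝ) :
    Γ.UF e (Γ.muRE c) (Γ.fRE c) = ∑ j, ∑ x, e j x * (Γ.lam j * phi Γ c j x) := by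
  rw [Game.UF]
  refine Finset.sum_congr rfl fun j _ => Finset.sum_congr rfl fun x _ => ?_
  rw [mul_assoc, coeff_eq Γ c j x, phi]

/-- Pointwise structure of an unconstrained firm-optimal policy. -/
lemma eq_struct (d : GrpI → ((j : Fin N) → Xs j) → ℝ) (hpol : IsPolicy d)
    (hopt : ∀ d', IsPolicy d' →
      Γ.UF d' (Γ.muRE c) (Γ.fRE c) ≤ Γ.UF d (Γ.muRE c) (Γ.fRE c))
    (i : GrpI) (x : (j : Fin N) → Xs j) :
    (0 < phi Γ c i x → d i x = 1) ∧ (phi Γ c i x < 0 → d i x = 0) := by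
  have key : ∀ v : ℝ, 0 ≤ v → v ≤ 1 →
      (v - d i x) * (Γ.lam i * phi Γ c i x) ≤ 0 := by
    intro v hv0 hv1
    set d' : GrpI → ((j : Fin N) → Xs j) → ℝ :=
      fun j y => if j = i ∧ y = x then v else d j y with hd'
    have hpol' : IsPolicy d' := by
      intro j y
      by_cases h : j = i ∧ y = x
      · have hv : d' j y = v := by rw [hd']; simp [h.1, h.2]
        rw [hv]; exact Set.mem_Icc.mpr ⟨hv0, hv1⟩
      · have hv : d' j y = d j y := by rw [hd']; simp [h]
        rw [hv]; exact hpol j y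
    have h := hopt d' hpol'
    rw [UF_as_phi, UF_as_phi] at h
    have hsplit : ∀ (e : GrpI → ((j : Fin N) → Xs j) → ℝ),
        ∑ j, ∑ y, e j y * (Γ.lam j * phi Γ c j y)
          = e i x * (Γ.lam i * phi Γ c i x)
            + ∑ y ∈ Finset.univ.erase x, e i y * (Γ.lam i * phi Γ c i y)
            + ∑ j ∈ Finset.univ.erase i, ∑ y, e j y * (Γ.lam j * phi Γ c j y) := by
      intro e
      rw [← Finset.add_sum_erase Finset.univ _ (Finset.mem_univ i)]
      rw [← Finset.add_sum_erase Finset.univ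
        (fun y => e i y * (Γ.lam i * phi Γ c i y)) (Finset.mem_univ x)]
    rw [hsplit, hsplit] at h
    have e1 : ∀ y ∈ Finset.univ.erase x,
        d' i y * (Γ.lam i * phi Γ c i y) = d i y * (Γ.lam i * phi Γ c i y) := by
      intro y hy
      have hyx : y ≠ x := Finset.ne_of_mem_erase hy
      rw [hd']; simp [hyx]
    have e2 : ∀ j ∈ Finset.univ.erase i, ∀ y,
        d' j y * (Γ.lam j * phi Γ c j y) = d j y * (Γ.lam j * phi Γ c j y) := by
      intro j hj y
      have hji : j ≠ i := Finset.ne_of_mem_erase hj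
      rw [hd']; simp [hji]
    have hd'ix : d' i x = v := by rw [hd']; simp
    rw [hd'ix] at h
    have hsame1 : ∑ y ∈ Finset.univ.erase x, d' i y * (Γ.lam i * phi Γ c i y)
        = ∑ y ∈ Finset.univ.erase x, d i y * (Γ.lam i * phi Γ c i y) :=
      Finset.sum_congr rfl fun y hy => e1 y hy
    have hsame2 : ∑ j ∈ Finset.univ.erase i, ∑ y, d' j y * (Γ.lam j * phi Γ c j y)
        = ∑ j ∈ Finset.univ.erase i, ∑ y, d j y * (Γ.lam j * phi Γ c j y) :=
      Finset.sum_congr rfl fun j hj => Finset.sum_congr rfl fun y _ => e2 j hj y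
    rw [hsame1, hsame2] at h
    nlinarith [h]
  have hl := lam_pos Γ i
  constructor
  · intro hphi
    have h1 := key 1 zero_le_one le_rfl
    have h2 := (hpol i x).2
    nlinarith [mul_pos hl hphi]
  · intro hphi
    have h0 := key 0 le_rfl zero_le_one
    have h2 := (hpol i x).1
    nlinarith [mul_neg_of_pos_of_neg hl hphi]

/-- The supporting-line property of an optimal within-group policy. -/
lemma line_le (d : GrpI → ((j : Fin N) → Xs j) → ℝ)
    (hstr : ∀ i x, (0 < phi Γ c i x → d i x = 1) ∧ (phi Γ c i x < 0 → d i x = 0))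
    (hpol : IsPolicy d) (i : GrpI)
    {e : ((j : Fin N) → Xs j) → ℝ} (he : ∀ x, e x ∈ Set.Icc (0:ℝ) 1) :
    Γ.G (c i) * Γ.vq * TT Γ i e - (1 - Γ.G (c i)) * Γ.vu * FF Γ i e
      ≤ Γ.G (c i) * Γ.vq * TT Γ i (d i) - (1 - Γ.G (c i)) * Γ.vu * FF Γ i (d i) := by
  rw [← expand_sum2, ← expand_sum2]
  refine Finset.sum_le_sum fun x _ => ?_
  have h1 : Γ.G (c i) * Γ.p i x Cls.q - (1 - Γ.G (c i)) * Γ.p i x Cls.u = 0 ∨ True := by tauto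
  rcases lt_trichotomy (phi Γ c i x) 0 with hphi | hphi | hphi
  · rw [(hstr i x).2 hphi]
    have : Γ.G (c i) * Γ.vq * Γ.p i x Cls.q - (1 - Γ.G (c i)) * Γ.vu * Γ.p i x Cls.u
        = phi Γ c i x := by rw [phi]
    nlinarith [(he x).1, (he x).2]
  · have : Γ.G (c i) * Γ.vq * Γ.p i x Cls.q - (1 - Γ.G (c i)) * Γ.vu * Γ.p i x Cls.u
        = phi Γ c i x := by rw [phi]
    rw [this, hphi]; simp
  · rw [(hstr i x).1 hphi]
    have : Γ.G (c i) * Γ.vq * Γ.p i x Cls.q - (1 - Γ.G (c i)) * Γ.vu * Γ.p i x Cls.u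
        = phi Γ c i x := by rw [phi]
    nlinarith [(he x).1, (he x).2]

/-- Net benefit of investment is nonnegative at an optimal policy. -/
lemma B_nonneg (d : GrpI → ((j : Fin N) → Xs j) → ℝ)
    (hstr : ∀ i x, (0 < phi Γ c i x → d i x = 1) ∧ (phi Γ c i x < 0 → d i x = 0))
    (hpol : IsPolicy d) (i : GrpI) :
    0 ≤ TT Γ i (d i) - FF Γ i (d i) := by
  have hG0 := G_pos Γ (c i); have hG1 := G_lt_one Γ (c i)
  have hvq := Γ.vq_pos; have hvu := Γ.vu_pos
  have hdiff : TT Γ i (d i) - FF Γ i (d i)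
      = ∑ x, d i x * (Γ.p i x Cls.q - Γ.p i x Cls.u) := by
    rw [TT, FF, ← Finset.sum_sub_distrib]
    exact Finset.sum_congr rfl fun x _ => by ring
  rw [hdiff]
  by_cases hc : (1 - Γ.G (c i)) * Γ.vu ≤ Γ.G (c i) * Γ.vq
  · have hzero : ∑ x, (Γ.p i x Cls.q - Γ.p i x Cls.u) = 0 := by
      rw [Finset.sum_sub_distrib, sum_p, sum_p]; ring
    have hle : ∑ x, (Γ.p i x Cls.q - Γ.p i x Cls.u)
        ≤ ∑ x, d i x * (Γ.p i x Cls.q - Γ.p i x Cls.u) := by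
      refine Finset.sum_le_sum fun x _ => ?_
      rcases le_or_gt (Γ.p i x Cls.q) (Γ.p i x Cls.u) with hqu | hqu
      · nlinarith [(hpol i x).2]
      · have hphi : 0 < phi Γ c i x := by
          rw [phi]
          have hq := p_pos Γ i x Cls.q
          have hw : (0:ℝ) < (1 - Γ.G (c i)) * Γ.vu := by nlinarith
          nlinarith [mul_le_mul_of_nonneg_right hc hq.le,
            mul_lt_mul_of_pos_left hqu hw]
        rw [(hstr i x).1 hphi]; ring_nf; exact le_rfl
    linarith
  · push_neg at hc
    refine Finset.sum_nonneg fun x _ => ?_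
    rcases le_or_gt (Γ.p i x Cls.u) (Γ.p i x Cls.q) with hqu | hqu
    · have := (hpol i x).1; nlinarith
    · have hphi : phi Γ c i x < 0 := by
        rw [phi]
        have hq := p_pos Γ i x Cls.q
        have hw : (0:ℝ) < (1 - Γ.G (c i)) * Γ.vu := by nlinarith
        nlinarith [mul_lt_mul_of_pos_right hc hq,
          mul_lt_mul_of_pos_left hqu hw]
      rw [(hstr i x).2 hphi]; ring_nf; exact le_rfl

end ZhuAux
namespace ZhuAux

lemma bounds_lemma {Gh Gl vq vu lh ll Th Fh Tl Fl tau Phi : ℝ}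
    (hGl0 : 0 < Gl) (hGh1 : Gh < 1) (hGlh : Gl < Gh)
    (hvq : 0 < vq) (hvu : 0 < vu) (hlh : 0 < lh) (hll : 0 < ll)
    (hBne : Tl - Fl ≠ Th - Fh)
    (L1 : Gh*vq*Tl - (1-Gh)*vu*Fl ≤ Gh*vq*Th - (1-Gh)*vu*Fh)
    (L2 : Gl*vq*Th - (1-Gl)*vu*Fh ≤ Gl*vq*Tl - (1-Gl)*vu*Fl)
    (L3 : Gh*vq*tau - (1-Gh)*vu*Phi ≤ Gh*vq*Th - (1-Gh)*vu*Fh)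
    (L4 : Gl*vq*tau - (1-Gl)*vu*Phi ≤ Gl*vq*Tl - (1-Gl)*vu*Fl)
    (L5 : lh*(Gh*vq*Th-(1-Gh)*vu*Fh) + ll*(Gl*vq*Th-(1-Gl)*vu*Fh)
        ≤ lh*(Gh*vq*tau-(1-Gh)*vu*Phi) + ll*(Gl*vq*tau-(1-Gl)*vu*Phi))
    (L6 : lh*(Gh*vq*Tl-(1-Gh)*vu*Fl) + ll*(Gl*vq*Tl-(1-Gl)*vu*Fl)
        ≤ lh*(Gh*vq*tau-(1-Gh)*vu*Phi) + ll*(Gl*vq*tau-(1-Gl)*vu*Phi)) :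
    Tl < Th ∧ Fl ≤ Fh ∧ Tl ≤ tau ∧ tau ≤ Th := by
  have hGh0 : 0 < Gh := lt_trans hGl0 hGlh
  have hGl1 : Gl < 1 := lt_trans hGlh hGh1
  have h1 := mul_le_mul_of_nonneg_left L1 (by linarith : (0:ℝ) ≤ 1 - Gl)
  have h2 := mul_le_mul_of_nonneg_left L2 (by linarith : (0:ℝ) ≤ 1 - Gh)
  have hTle : Tl ≤ Th := by
    by_contra hcon
    push_neg at hcon
    have hcube : 0 < (Gh - Gl) * vq * (Tl - Th) :=
      mul_pos (mul_pos (sub_pos.2 hGlh) hvq) (sub_pos.2 hcon)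
    linarith [h1, h2, hcube]
  have hFle : Fl ≤ Fh := by
    by_contra hcon
    push_neg at hcon
    have ha : 0 ≤ Gl * vq * (Th - Tl) :=
      mul_nonneg (mul_nonneg hGl0.le hvq.le) (sub_nonneg.2 hTle)
    have hb : 0 < (1 - Gl) * vu * (Fl - Fh) :=
      mul_pos (mul_pos (by linarith : (0:ℝ) < 1 - Gl) hvu) (sub_pos.2 hcon)
    linarith [L2, ha, hb]
  have hTlt : Tl < Th := by
    rcases lt_or_eq_of_le hTle with h | h
    · exact h
    · exfalso
      have hFge : Fh ≤ Fl := by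
        by_contra hcon
        push_neg at hcon
        have hb : 0 < (1 - Gh) * vu * (Fh - Fl) :=
          mul_pos (mul_pos (by linarith : (0:ℝ) < 1 - Gh) hvu) (sub_pos.2 hcon)
        rw [h] at L1
        linarith [L1, hb]
      exact hBne (by rw [h]; linarith [le_antisymm hFle hFge])
  have hX : Gh*vq*tau - (1-Gh)*vu*Phi - (Gh*vq*Th - (1-Gh)*vu*Fh) ≤ 0 := by linarith
  have hY : 0 ≤ Gl*vq*tau - (1-Gl)*vu*Phi - (Gl*vq*Th - (1-Gl)*vu*Fh) := by
    by_contra hcon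
    push_neg at hcon
    linarith [mul_nonpos_of_nonneg_of_nonpos hlh.le hX,
      mul_neg_of_pos_of_neg hll hcon]
  have htau2 : tau ≤ Th := by
    by_contra hcon
    push_neg at hcon
    have hcube : 0 < (Gh - Gl) * vq * (tau - Th) :=
      mul_pos (mul_pos (sub_pos.2 hGlh) hvq) (sub_pos.2 hcon)
    linarith [mul_le_mul_of_nonneg_left hX (by linarith : (0:ℝ) ≤ 1 - Gl),
      mul_le_mul_of_nonneg_left hY (by linarith : (0:ℝ) ≤ 1 - Gh), hcube]
  have hY' : Gl*vq*tau - (1-Gl)*vu*Phi - (Gl*vq*Tl - (1-Gl)*vu*Fl) ≤ 0 := by linarith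
  have hX' : 0 ≤ Gh*vq*tau - (1-Gh)*vu*Phi - (Gh*vq*Tl - (1-Gh)*vu*Fl) := by
    by_contra hcon
    push_neg at hcon
    linarith [mul_nonpos_of_nonneg_of_nonpos hll.le hY',
      mul_neg_of_pos_of_neg hlh hcon]
  have htau1 : Tl ≤ tau := by
    by_contra hcon
    push_neg at hcon
    have hcube : 0 < (Gh - Gl) * vq * (Tl - tau) :=
      mul_pos (mul_pos (sub_pos.2 hGlh) hvq) (sub_pos.2 hcon)
    linarith [mul_le_mul_of_nonneg_left hY' (by linarith : (0:ℝ) ≤ 1 - Gh),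
      mul_le_mul_of_nonneg_left hX' (by linarith : (0:ℝ) ≤ 1 - Gl), hcube]
  exact ⟨hTlt, hFle, htau1, htau2⟩

lemma interval_lemma {Gh Gl vq vu Th Fh Tl Fl tau Phi : ℝ}
    (hGl0 : 0 < Gl) (hGh1 : Gh < 1) (hGlh : Gl < Gh) (hvq : 0 < vq) (hvu : 0 < vu)
    (hTl0 : 0 ≤ Tl) (hFl0 : 0 ≤ Fl) (hFh0 : 0 ≤ Fh) (hPhi0 : 0 ≤ Phi)
    (hBl : Fl ≤ Tl) (hBlh : Tl - Fl < Th - Fh)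
    (hTlh : Tl < Th) (hFlh : Fl ≤ Fh) (htau1 : Tl ≤ tau) (htau2 : tau ≤ Th)
    (L4 : Gl*vq*tau - (1-Gl)*vu*Phi ≤ Gl*vq*Tl - (1-Gl)*vu*Fl)
    (L7 : Phi * Th ≤ tau * Fh) :
    Set.Icc (min (Gh*tau + (1-Gh)*Phi) (Gl*tau + (1-Gl)*Phi))
        (max (Gh*tau + (1-Gh)*Phi) (Gl*tau + (1-Gl)*Phi))
      ⊂ Set.Icc (Gl*Tl + (1-Gl)*Fl) (Gh*Th + (1-Gh)*Fh) := by
  have hGh0 : 0 < Gh := lt_trans hGl0 hGlh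
  have hGl1 : Gl < 1 := lt_trans hGlh hGh1
  have hTh0 : 0 < Th := lt_of_le_of_lt hTl0 hTlh
  have htau0 : 0 ≤ tau := le_trans hTl0 htau1
  have hBh0 : 0 < Th - Fh := lt_of_le_of_lt (by linarith) hBlh
  have hM0 : 0 < Gh*Th + (1-Gh)*Fh := by
    have := mul_pos hGh0 hTh0
    have := mul_nonneg (by linarith : (0:ℝ) ≤ 1 - Gh) hFh0
    linarith
  have hPhiFl : Fl ≤ Phi := by
    by_contra hcon
    push_neg at hcon
    have ha : 0 ≤ Gl * vq * (tau - Tl) :=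
      mul_nonneg (mul_nonneg hGl0.le hvq.le) (sub_nonneg.2 htau1)
    have hb : 0 < (1 - Gl) * vu * (Fl - Phi) :=
      mul_pos (mul_pos (by linarith : (0:ℝ) < 1 - Gl) hvu) (sub_pos.2 hcon)
    linarith [L4, ha, hb]
  have hPhiFh : Phi ≤ Fh := by
    by_contra hcon
    push_neg at hcon
    have h1 : tau * Fh ≤ Th * Fh := mul_le_mul_of_nonneg_right htau2 hFh0
    have h2 : Th * Fh < Th * Phi := mul_lt_mul_of_pos_left hcon hTh0
    linarith [L7, h1, h2]
  have h_m_le_al : Gl*Tl + (1-Gl)*Fl ≤ Gl*tau + (1-Gl)*Phi := by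
    have h1 : Gl * Tl ≤ Gl * tau := mul_le_mul_of_nonneg_left htau1 hGl0.le
    have h2 : (1-Gl) * Fl ≤ (1-Gl) * Phi :=
      mul_le_mul_of_nonneg_left hPhiFl (by linarith)
    linarith
  have h_m_le_ah : Gl*Tl + (1-Gl)*Fl ≤ Gh*tau + (1-Gh)*Phi := by
    have h1 : Gh * Tl ≤ Gh * tau := mul_le_mul_of_nonneg_left htau1 hGh0.le
    have h2 : (1-Gh) * Fl ≤ (1-Gh) * Phi :=
      mul_le_mul_of_nonneg_left hPhiFl (by linarith)
    have h3 : 0 ≤ (Gh - Gl) * (Tl - Fl) :=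
      mul_nonneg (sub_pos.2 hGlh).le (sub_nonneg.2 hBl)
    linarith [h1, h2, h3]
  have h_ah_le_M : Gh*tau + (1-Gh)*Phi ≤ Gh*Th + (1-Gh)*Fh := by
    have h1 : Gh * tau ≤ Gh * Th := mul_le_mul_of_nonneg_left htau2 hGh0.le
    have h2 : (1-Gh) * Phi ≤ (1-Gh) * Fh :=
      mul_le_mul_of_nonneg_left hPhiFh (by linarith)
    linarith
  have h_al_lt_M : Gl*tau + (1-Gl)*Phi < Gh*Th + (1-Gh)*Fh := by
    by_contra hcon
    push_neg at hcon
    have hc := mul_le_mul_of_nonneg_left hcon hTh0.le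
    have hL7' := mul_le_mul_of_nonneg_left L7 (by linarith : (0:ℝ) ≤ 1 - Gl)
    rcases lt_or_eq_of_le htau2 with h | h
    · have h4 : 0 < (Th - tau) * (Gh*Th + (1-Gh)*Fh) := mul_pos (sub_pos.2 h) hM0
      have h5 : 0 ≤ tau * ((Gh - Gl) * (Th - Fh)) :=
        mul_nonneg htau0 (mul_nonneg (sub_pos.2 hGlh).le hBh0.le)
      linarith [hc, hL7', h4, h5]
    · have h4 : 0 < (Gh - Gl) * (Th - Fh) * Th :=
        mul_pos (mul_pos (sub_pos.2 hGlh) hBh0) hTh0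
      subst h
      linarith [hc, hL7', h4]
  have h_m_lt_M : Gl*Tl + (1-Gl)*Fl < Gh*Th + (1-Gh)*Fh := by
    have h1 : 0 < Gh * (Th - Tl) := mul_pos hGh0 (sub_pos.2 hTlh)
    have h2 : 0 ≤ (1 - Gh) * (Fh - Fl) :=
      mul_nonneg (by linarith) (sub_nonneg.2 hFlh)
    have h3 : 0 ≤ (Gh - Gl) * (Tl - Fl) :=
      mul_nonneg (sub_pos.2 hGlh).le (sub_nonneg.2 hBl)
    linarith [h1, h2, h3]
  have hsub : Set.Icc (min (Gh*tau + (1-Gh)*Phi) (Gl*tau + (1-Gl)*Phi))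
      (max (Gh*tau + (1-Gh)*Phi) (Gl*tau + (1-Gl)*Phi))
        ⊆ Set.Icc (Gl*Tl + (1-Gl)*Fl) (Gh*Th + (1-Gh)*Fh) :=
    Set.Icc_subset_Icc (le_min h_m_le_ah h_m_le_al) (max_le h_ah_le_M h_al_lt_M.le)
  have hnot : max (Gh*tau + (1-Gh)*Phi) (Gl*tau + (1-Gl)*Phi) < Gh*Th + (1-Gh)*Fh
      ∨ Gl*Tl + (1-Gl)*Fl < min (Gh*tau + (1-Gh)*Phi) (Gl*tau + (1-Gl)*Phi) := by
    rcases max_cases (Gh*tau + (1-Gh)*Phi) (Gl*tau + (1-Gl)*Phi) with ⟨hmx, hge⟩ | ⟨hmx, hge⟩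
    · rcases lt_or_eq_of_le h_ah_le_M with h | h
      · left; rw [hmx]; exact h
      · have h1 : Gh * tau ≤ Gh * Th := mul_le_mul_of_nonneg_left htau2 hGh0.le
        have h2 : (1-Gh) * Phi ≤ (1-Gh) * Fh :=
          mul_le_mul_of_nonneg_left hPhiFh (by linarith)
        have h3 : Gh * tau = Gh * Th := by linarith
        have htauTh : tau = Th := mul_left_cancel₀ hGh0.ne' h3
        right
        refine lt_min ?_ ?_
        · rw [h]; exact h_m_lt_M
        · rw [htauTh]
          have h4 : 0 < Gl * (Th - Tl) := mul_pos hGl0 (sub_pos.2 hTlh)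
          have h5 : (1-Gl) * Fl ≤ (1-Gl) * Phi :=
            mul_le_mul_of_nonneg_left hPhiFl (by linarith)
          linarith [h4, h5]
    · left; rw [hmx]; exact h_al_lt_M
  refine ⟨hsub, fun hcon => ?_⟩
  rcases hnot with h | h
  · have hMmem : Gh*Th + (1-Gh)*Fh ∈ Set.Icc (Gl*Tl + (1-Gl)*Fl) (Gh*Th + (1-Gh)*Fh) :=
      Set.mem_Icc.mpr ⟨h_m_lt_M.le, le_rfl⟩
    have := (hcon hMmem).2
    linarith
  · have hmmem : Gl*Tl + (1-Gl)*Fl ∈ Set.Icc (Gl*Tl + (1-Gl)*Fl) (Gh*Th + (1-Gh)*Fh) :=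
      Set.mem_Icc.mpr ⟨le_rfl, h_m_lt_M.le⟩
    have := (hcon hmmem).1
    linarith

end ZhuAux
namespace ZhuAux

open Finset

variable {N : ℕ} {Xs : Fin N → Type} [∀ j, Fintype (Xs j)] [∀ j, Nonempty (Xs j)]
variable (Γ : Game N Xs) (c : GrpI → ℝ)

lemma TT_smul (i : GrpI) (s : ℝ) (e : ((j : Fin N) → Xs j) → ℝ) :
    TT Γ i (fun x => s * e x) = s * TT Γ i e := by
  rw [TT, TT, Finset.mul_sum]
  exact Finset.sum_congr rfl fun x _ => by ring

lemma FF_smul (i : GrpI) (s : ℝ) (e : ((j : Fin N) → Xs j) → ℝ) :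
    FF Γ i (fun x => s * e x) = s * FF Γ i e := by
  rw [FF, FF, Finset.mul_sum]
  exact Finset.sum_congr rfl fun x _ => by ring

/-- A firm-optimal policy under equal opportunity minimizes the false-positive
mass given its true-positive mass, within each group. -/
lemma min_FF (dh : GrpI → ((j : Fin N) → Xs j) → ℝ)
    (hmem : dh ∈ EOset (Γ.muRE c) (Γ.fRE c))
    (hmax : ∀ d' ∈ EOset (Γ.muRE c) (Γ.fRE c),
      Γ.UF d' (Γ.muRE c) (Γ.fRE c) ≤ Γ.UF dh (Γ.muRE c) (Γ.fRE c))
    (i : GrpI) {e : ((j : Fin N) → Xs j) → ℝ} (he : ∀ x, e x ∈ Set.Icc (0:ℝ) 1)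
    (hT : TT Γ i e = TT Γ i (dh i)) :
    FF Γ i (dh i) ≤ FF Γ i e := by
  obtain ⟨hpolh, hTP⟩ := hmem
  set d' : GrpI → ((j : Fin N) → Xs j) → ℝ := fun j => if j = i then e else dh j with hd'
  have hd'i : d' i = e := by rw [hd']; simp
  have hd'o : ∀ j, j ≠ i → d' j = dh j := by intro j hj; rw [hd']; simp [hj]
  have hpol' : IsPolicy d' := by
    intro j y
    by_cases hj : j = i
    · subst hj; rw [hd'i]; exact he y
    · rw [hd'o j hj]; exact hpolh j y
  have hTPh : TT Γ GrpI.w (dh GrpI.w) = TT Γ GrpI.b (dh GrpI.b) := by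
    rw [TP_eq, TP_eq] at hTP; exact hTP
  have hmemEO : d' ∈ EOset (Γ.muRE c) (Γ.fRE c) := by
    refine ⟨hpol', ?_⟩
    rw [TP_eq, TP_eq]
    cases i
    · rw [hd'i, hd'o GrpI.b (by simp)]
      rw [hT]; exact hTPh
    · rw [hd'i, hd'o GrpI.w (by simp)]
      rw [hT]; exact hTPh
  have h := hmax d' hmemEO
  rw [UF_eq, UF_eq, grpi_sum_oth _ i, grpi_sum_oth _ i] at h
  rw [hd'i, hd'o (oth i) (oth_ne i), hT] at h
  have hpos : 0 < Γ.lam i * ((1 - Γ.G (c i)) * Γ.vu) :=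
    mul_pos (lam_pos Γ i) (mul_pos (by linarith [G_lt_one Γ (c i)]) Γ.vu_pos)
  by_contra hcon
  push_neg at hcon
  have := mul_lt_mul_of_pos_left (sub_pos.2 hcon) hpos
  nlinarith [h, this]

/-- The main comparison, stated for the high-cost group `hi` and the
low-cost group `lo`. -/
lemma main_case (d dh : GrpI → ((j : Fin N) → Xs j) → ℝ) (hi lo : GrpI)
    (hlo : oth hi = lo)
    (hpol : IsPolicy d)
    (hstr : ∀ i x, (0 < phi Γ c i x → d i x = 1) ∧ (phi Γ c i x < 0 → d i x = 0))
    (hbr : Γ.BestResponds c d)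
    (hmem : dh ∈ EOset (Γ.muRE c) (Γ.fRE c))
    (hmax : ∀ d' ∈ EOset (Γ.muRE c) (Γ.fRE c),
      Γ.UF d' (Γ.muRE c) (Γ.fRE c) ≤ Γ.UF dh (Γ.muRE c) (Γ.fRE c))
    (hord : c lo < c hi) :
    Set.Icc (min (AR hi dh (Γ.muRE c)) (AR lo dh (Γ.muRE c)))
        (max (AR hi dh (Γ.muRE c)) (AR lo dh (Γ.muRE c)))
      ⊂ Set.Icc (min (AR hi d (Γ.muRE c)) (AR lo d (Γ.muRE c)))
          (max (AR hi d (Γ.muRE c)) (AR lo d (Γ.muRE c))) := by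
  have hne : lo ≠ hi := by rw [← hlo]; exact oth_ne hi
  have hpolh : IsPolicy dh := hmem.1
  have hdhb : ∀ i, ∀ x, dh i x ∈ Set.Icc (0:ℝ) 1 := fun i x => hpolh i x
  have hdb : ∀ i, ∀ x, d i x ∈ Set.Icc (0:ℝ) 1 := fun i x => hpol i x
  -- scalar abbreviations
  have hGlh : Γ.G (c lo) < Γ.G (c hi) := G_strict Γ hord
  have hGl0 : 0 < Γ.G (c lo) := G_pos Γ (c lo)
  have hGh1 : Γ.G (c hi) < 1 := G_lt_one Γ (c hi)
  have hvq := Γ.vq_pos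
  have hvu := Γ.vu_pos
  have hlamh := lam_pos Γ hi
  have hlaml := lam_pos Γ lo
  -- equal-opportunity constraint for dh
  have hEO : TT Γ hi (dh hi) = TT Γ lo (dh lo) := by
    have h := hmem.2
    rw [TP_eq, TP_eq] at h
    cases hi <;> cases lo <;> first | exact h | exact h.symm | exact absurd rfl hne
  -- common false-positive mass
  have hPhiEq : FF Γ hi (dh hi) = FF Γ lo (dh lo) := by
    have h1 : FF Γ hi (dh hi) ≤ FF Γ lo (dh lo) := by
      have hb : ∀ x, trN Γ lo (dh lo) x ∈ Set.Icc (0:ℝ) 1 := fun x =>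
        ⟨trN_nonneg Γ lo (hdhb lo) x, trN_le_one Γ lo (hdhb lo) x⟩
      have hT : TT Γ hi (trN Γ lo (dh lo)) = TT Γ hi (dh hi) := by
        rw [trN_TT, hEO]
      have := min_FF Γ c dh ⟨hpolh, hmem.2⟩ hmax hi hb hT
      rwa [trN_FF] at this
    have h2 : FF Γ lo (dh lo) ≤ FF Γ hi (dh hi) := by
      have hb : ∀ x, trN Γ hi (dh hi) x ∈ Set.Icc (0:ℝ) 1 := fun x =>
        ⟨trN_nonneg Γ hi (hdhb hi) x, trN_le_one Γ hi (hdhb hi) x⟩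
      have hT : TT Γ lo (trN Γ hi (dh hi)) = TT Γ lo (dh lo) := by
        rw [trN_TT, hEO]
      have := min_FF Γ c dh ⟨hpolh, hmem.2⟩ hmax lo hb hT
      rwa [trN_FF] at this
    exact le_antisymm h1 h2
  -- supporting lines
  have L1 : Γ.G (c hi)*Γ.vq*(TT Γ lo (d lo)) - (1-Γ.G (c hi))*Γ.vu*(FF Γ lo (d lo))
      ≤ Γ.G (c hi)*Γ.vq*(TT Γ hi (d hi)) - (1-Γ.G (c hi))*Γ.vu*(FF Γ hi (d hi)) := by
    have hb : ∀ x, trN Γ lo (d lo) x ∈ Set.Icc (0:ℝ) 1 := fun x =>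
      ⟨trN_nonneg Γ lo (hdb lo) x, trN_le_one Γ lo (hdb lo) x⟩
    have := line_le Γ c d hstr hpol hi hb
    rwa [trN_TT, trN_FF] at this
  have L2 : Γ.G (c lo)*Γ.vq*(TT Γ hi (d hi)) - (1-Γ.G (c lo))*Γ.vu*(FF Γ hi (d hi))
      ≤ Γ.G (c lo)*Γ.vq*(TT Γ lo (d lo)) - (1-Γ.G (c lo))*Γ.vu*(FF Γ lo (d lo)) := by
    have hb : ∀ x, trN Γ hi (d hi) x ∈ Set.Icc (0:ℝ) 1 := fun x =>
      ⟨trN_nonneg Γ hi (hdb hi) x, trN_le_one Γ hi (hdb hi) x⟩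
    have := line_le Γ c d hstr hpol lo hb
    rwa [trN_TT, trN_FF] at this
  have L3 : Γ.G (c hi)*Γ.vq*(TT Γ hi (dh hi)) - (1-Γ.G (c hi))*Γ.vu*(FF Γ hi (dh hi))
      ≤ Γ.G (c hi)*Γ.vq*(TT Γ hi (d hi)) - (1-Γ.G (c hi))*Γ.vu*(FF Γ hi (d hi)) :=
    line_le Γ c d hstr hpol hi (hdhb hi)
  have L4 : Γ.G (c lo)*Γ.vq*(TT Γ hi (dh hi)) - (1-Γ.G (c lo))*Γ.vu*(FF Γ hi (dh hi))
      ≤ Γ.G (c lo)*Γ.vq*(TT Γ lo (d lo)) - (1-Γ.G (c lo))*Γ.vu*(FF Γ lo (d lo)) := by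
    have := line_le Γ c d hstr hpol lo (hdhb lo)
    rwa [← hEO, ← hPhiEq] at this
  -- comparison with the fair policies built from d hi and d lo
  have L56 : ∀ i0 : GrpI,
      Γ.lam hi*(Γ.G (c hi)*Γ.vq*(TT Γ i0 (d i0)) - (1-Γ.G (c hi))*Γ.vu*(FF Γ i0 (d i0)))
        + Γ.lam lo*(Γ.G (c lo)*Γ.vq*(TT Γ i0 (d i0)) - (1-Γ.G (c lo))*Γ.vu*(FF Γ i0 (d i0)))
      ≤ Γ.lam hi*(Γ.G (c hi)*Γ.vq*(TT Γ hi (dh hi)) - (1-Γ.G (c hi))*Γ.vu*(FF Γ hi (dh hi)))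
        + Γ.lam lo*(Γ.G (c lo)*Γ.vq*(TT Γ hi (dh hi)) - (1-Γ.G (c lo))*Γ.vu*(FF Γ hi (dh hi))) := by
    intro i0
    set D : GrpI → ((j : Fin N) → Xs j) → ℝ :=
      fun j => if j = i0 then d i0 else trN Γ i0 (d i0) with hD
    have hDb : ∀ j x, D j x ∈ Set.Icc (0:ℝ) 1 := by
      intro j x
      by_cases hj : j = i0
      · rw [hD]; simp only [if_pos hj]; exact hdb i0 x
      · rw [hD]; simp only [if_neg hj]
        exact ⟨trN_nonneg Γ i0 (hdb i0) x, trN_le_one Γ i0 (hdb i0) x⟩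
    have hDT : ∀ j, TT Γ j (D j) = TT Γ i0 (d i0) := by
      intro j
      by_cases hj : j = i0
      · subst hj; rw [hD]; simp
      · rw [hD]; simp only [if_neg hj]; exact trN_TT Γ i0 j (d i0)
    have hDF : ∀ j, FF Γ j (D j) = FF Γ i0 (d i0) := by
      intro j
      by_cases hj : j = i0
      · subst hj; rw [hD]; simp
      · rw [hD]; simp only [if_neg hj]; exact trN_FF Γ i0 j (d i0)
    have hDmem : D ∈ EOset (Γ.muRE c) (Γ.fRE c) := by
      refine ⟨hDb, ?_⟩
      rw [TP_eq, TP_eq, hDT GrpI.w, hDT GrpI.b]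
    have h := hmax D hDmem
    rw [UF_eq, UF_eq, grpi_sum_oth _ hi, grpi_sum_oth _ hi, hlo] at h
    rw [hDT hi, hDT lo, hDF hi, hDF lo, ← hEO, ← hPhiEq] at h
    exact h
  have L5 := L56 hi
  have L6 := L56 lo
  -- invoke the bounds lemma
  have hBlh : TT Γ lo (d lo) - FF Γ lo (d lo) < TT Γ hi (d hi) - FF Γ hi (d hi) := by
    have h1 := cost_eq Γ c d hbr hi
    have h2 := cost_eq Γ c d hbr lo
    rw [h1, h2] at hord
    exact (mul_lt_mul_iff_right₀ Γ.om_pos).mp hord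
  have hbds := bounds_lemma hGl0 hGh1 hGlh hvq hvu hlamh hlaml hBlh.ne L1 L2 L3 L4 L5 L6
  obtain ⟨hTlh, hFlh, htau1, htau2⟩ := hbds
  have hTl0 : 0 ≤ TT Γ lo (d lo) := TT_nonneg Γ lo (hdb lo)
  have hTh0 : 0 < TT Γ hi (d hi) := lt_of_le_of_lt hTl0 hTlh
  -- the scaled-policy inequality L7
  have L7 : FF Γ hi (dh hi) * TT Γ hi (d hi) ≤ TT Γ hi (dh hi) * FF Γ hi (d hi) := by
    set s : ℝ := TT Γ hi (dh hi) / TT Γ hi (d hi) with hs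
    have hs0 : 0 ≤ s := div_nonneg (le_trans hTl0 htau1) hTh0.le
    have hs1 : s ≤ 1 := (div_le_one hTh0).mpr htau2
    have hb : ∀ x, (fun x => s * d hi x) x ∈ Set.Icc (0:ℝ) 1 := by
      intro x
      constructor
      · exact mul_nonneg hs0 (hdb hi x).1
      · calc s * d hi x ≤ 1 * 1 :=
            mul_le_mul hs1 (hdb hi x).2 (hdb hi x).1 zero_le_one
          _ = 1 := by ring
    have hT : TT Γ hi (fun x => s * d hi x) = TT Γ hi (dh hi) := by
      rw [TT_smul, hs, div_mul_cancel₀]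
      exact hTh0.ne'
    have h := min_FF Γ c dh ⟨hpolh, hmem.2⟩ hmax hi hb hT
    rw [FF_smul] at h
    have := mul_le_mul_of_nonneg_right h hTh0.le
    calc FF Γ hi (dh hi) * TT Γ hi (d hi)
        ≤ s * FF Γ hi (d hi) * TT Γ hi (d hi) := this
      _ = TT Γ hi (dh hi) * FF Γ hi (d hi) := by
          rw [hs]; field_simp
  -- remaining scalar facts
  have hFl0 : 0 ≤ FF Γ lo (d lo) := FF_nonneg Γ lo (hdb lo)
  have hFh0 : 0 ≤ FF Γ hi (d hi) := FF_nonneg Γ hi (hdb hi)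
  have hPhi0 : 0 ≤ FF Γ hi (dh hi) := FF_nonneg Γ hi (hdhb hi)
  have hBl : FF Γ lo (d lo) ≤ TT Γ lo (d lo) := by
    have := B_nonneg Γ c d hstr hpol lo; linarith
  -- conclude via the interval lemma
  have hmain := interval_lemma hGl0 hGh1 hGlh hvq hvu hTl0 hFl0 hFh0 hPhi0 hBl hBlh
    hTlh hFlh htau1 htau2 L4 L7
  -- rewrite acceptance rates
  have hARhd : AR hi d (Γ.muRE c)
      = Γ.G (c hi) * TT Γ hi (d hi) + (1 - Γ.G (c hi)) * FF Γ hi (d hi) := by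
    rw [AR_eq]; ring
  have hARld : AR lo d (Γ.muRE c)
      = Γ.G (c lo) * TT Γ lo (d lo) + (1 - Γ.G (c lo)) * FF Γ lo (d lo) := by
    rw [AR_eq]; ring
  have hARhdh : AR hi dh (Γ.muRE c)
      = Γ.G (c hi) * TT Γ hi (dh hi) + (1 - Γ.G (c hi)) * FF Γ hi (dh hi) := by
    rw [AR_eq]; ring
  have hARldh : AR lo dh (Γ.muRE c)
      = Γ.G (c lo) * TT Γ hi (dh hi) + (1 - Γ.G (c lo)) * FF Γ hi (dh hi) := by
    rw [AR_eq, ← hEO, ← hPhiEq]; ring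
  have hmM : Γ.G (c lo) * TT Γ lo (d lo) + (1 - Γ.G (c lo)) * FF Γ lo (d lo)
      ≤ Γ.G (c hi) * TT Γ hi (d hi) + (1 - Γ.G (c hi)) * FF Γ hi (d hi) := by
    have h1 : 0 < Γ.G (c hi) * (TT Γ hi (d hi) - TT Γ lo (d lo)) :=
      mul_pos (lt_trans hGl0 hGlh) (sub_pos.2 hTlh)
    have h2 : 0 ≤ (1 - Γ.G (c hi)) * (FF Γ hi (d hi) - FF Γ lo (d lo)) :=
      mul_nonneg (by linarith) (sub_nonneg.2 hFlh)
    have h3 : 0 ≤ (Γ.G (c hi) - Γ.G (c lo)) * (TT Γ lo (d lo) - FF Γ lo (d lo)) :=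
      mul_nonneg (sub_pos.2 hGlh).le (sub_nonneg.2 hBl)
    linarith
  rw [hARhd, hARld, hARhdh, hARldh]
  rw [min_eq_right hmM, max_eq_left hmM]
  exact hmain

end ZhuAux

/-- **Theorem 1 (property 1).** Under the equal opportunity control, in any
discriminatory equilibrium every firm-optimal decision policy strictly shrinks
the interval between the two groups' acceptance rates: the equal opportunity
control brings gains to the discriminated group. -/
theorem equal_opportunity_gains_to_discriminated
    {N : ℕ} {Xs : Fin N → Type} [∀ j, Fintype (Xs j)] [∀ j, Nonempty (Xs j)]
    (Γ : Game N Xs) (hone : Γ.OneNotLV)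
    (c : GrpI → ℝ) (d : GrpI → ((j : Fin N) → Xs j) → ℝ)
    (heq : Γ.IsEquilibrium c d) (hdisc : c GrpI.w ≠ c GrpI.b)
    (dh : GrpI → ((j : Fin N) → Xs j) → ℝ)
    (hmem : dh ∈ EOset (Γ.muRE c) (Γ.fRE c))
    (hmax : ∀ d' ∈ EOset (Γ.muRE c) (Γ.fRE c),
      Γ.UF d' (Γ.muRE c) (Γ.fRE c) ≤ Γ.UF dh (Γ.muRE c) (Γ.fRE c)) :
    Set.Icc (min (AR GrpI.w dh (Γ.muRE c)) (AR GrpI.b dh (Γ.muRE c)))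
        (max (AR GrpI.w dh (Γ.muRE c)) (AR GrpI.b dh (Γ.muRE c))) ⊂
      Set.Icc (min (AR GrpI.w d (Γ.muRE c)) (AR GrpI.b d (Γ.muRE c)))
        (max (AR GrpI.w d (Γ.muRE c)) (AR GrpI.b d (Γ.muRE c))) := by
  obtain ⟨hpol, hbr, hopt⟩ := heq
  have hstr := ZhuAux.eq_struct Γ c d hpol hopt
  rcases lt_or_gt_of_ne hdisc with h | h
  · have hmain := ZhuAux.main_case Γ c d dh GrpI.b GrpI.w rfl hpol hstr hbr hmem hmax h
    rw [min_comm (AR GrpI.b dh (Γ.muRE c)) (AR GrpI.w dh (Γ.muRE c)),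
      max_comm (AR GrpI.b dh (Γ.muRE c)) (AR GrpI.w dh (Γ.muRE c)),
      min_comm (AR GrpI.b d (Γ.muRE c)) (AR GrpI.w d (Γ.muRE c)),
      max_comm (AR GrpI.b d (Γ.muRE c)) (AR GrpI.w d (Γ.muRE c))] at hmain
    exact hmain
  · exact ZhuAux.main_case Γ c d dh GrpI.w GrpI.b rfl hpol hstr hbr hmem hmax h
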